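/- For a ∈ (0,1] and τ ≥ 0, with ω = e^{-πi/4}, the function G(τ) := e^{-2πaωτ} sinh(2πaωτ)/sinh(πωτ) (with G(0) := 2a by continuity) satisfies |G(τ)| ≤ G(0) = 2a for all τ ≥ 0. -/

import Mathlib

noncomputable def omg : ℂ := Complex.exp (-(Real.pi : ℂ) * Complex.I / 4)

/-- `G(τ) = e^{-2πaωτ} sinh(2πaωτ)/sinh(πωτ)` with `G(0) := 2a` (its limit). -/
noncomputable def Gfun (a : ℝ) (τ : ℝ) : ℂ :=
  if τ = 0 then (2 * a : ℝ)
  else Complex.exp (-2 * (Real.pi : ℂ) * (a : ℂ) * omg * (τ : ℂ)) *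
    Complex.sinh (2 * (Real.pi : ℂ) * (a : ℂ) * omg * (τ : ℂ)) /
      Complex.sinh ((Real.pi : ℂ) * omg * (τ : ℂ))

/-- `sin x ≥ x - x³/6` for `x ≥ 0`. -/
lemma aux_sin_lower (x : ℝ) (hx : 0 ≤ x) : x - x ^ 3 / 6 ≤ Real.sin x := by
  have hmono : MonotoneOn (fun t : ℝ => Real.sin t - t + t ^ 3 / 6) (Set.Ici 0) := by
    apply monotoneOn_of_deriv_nonneg (convex_Ici 0)
    · fun_prop
    · apply Differentiable.differentiableOn
      fun_prop
    · intro t _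
      have hd : deriv (fun t : ℝ => Real.sin t - t + t ^ 3 / 6) t
          = Real.cos t - 1 + t ^ 2 / 2 := by
        have h1 : HasDerivAt (fun t : ℝ => Real.sin t - t + t ^ 3 / 6)
            (Real.cos t - 1 + 3 * t ^ 2 / 6) t := by
          have := (Real.hasDerivAt_sin t).sub (hasDerivAt_id t)
          have h2 : HasDerivAt (fun t : ℝ => t ^ 3 / 6) (3 * t ^ 2 / 6) t := by
            simpa using (hasDerivAt_pow 3 t).div_const 6
          exact this.add h2
        rw [h1.deriv]; ring
      rw [hd]
      have := Real.one_sub_sq_div_two_le_cos (x := t)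
      linarith
  have h0 : (0:ℝ) ∈ Set.Ici (0:ℝ) := Set.self_mem_Ici
  have := hmono h0 hx hx
  simp only [Real.sin_zero] at this
  linarith

/-- `cosh x ≥ 1 + x²/2` for all `x`. -/
lemma aux_cosh_lower (x : ℝ) : 1 + x ^ 2 / 2 ≤ Real.cosh x := by
  have h := Real.cosh_two_mul (x / 2)
  have hx2 : 2 * (x / 2) = x := by ring
  rw [hx2] at h
  have hs : (x / 2) ^ 2 ≤ Real.sinh (x / 2) ^ 2 := by
    rcases le_or_gt 0 x with hx | hx
    · have : x / 2 ≤ Real.sinh (x / 2) := Real.self_le_sinh_iff.2 (by linarith)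
      nlinarith [this, (by linarith : (0:ℝ) ≤ x / 2)]
    · have h1 : Real.sinh (x / 2) ≤ x / 2 := Real.sinh_le_self_iff.2 (by linarith)
      nlinarith [h1, (by linarith : x / 2 ≤ (0:ℝ))]
  have hc : 1 ≤ Real.cosh (x / 2) ^ 2 := by nlinarith [Real.one_le_cosh (x / 2)]
  nlinarith [Real.cosh_sq (x / 2)]

/-- `sinh x ≥ x + x³/6` for `x ≥ 0`. -/
lemma aux_sinh_lower (x : ℝ) (hx : 0 ≤ x) : x + x ^ 3 / 6 ≤ Real.sinh x := by
  have hmono : MonotoneOn (fun t : ℝ => Real.sinh t - t - t ^ 3 / 6) (Set.Ici 0) := by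
    apply monotoneOn_of_deriv_nonneg (convex_Ici 0)
    · fun_prop
    · apply Differentiable.differentiableOn
      fun_prop
    · intro t _
      have hd : deriv (fun t : ℝ => Real.sinh t - t - t ^ 3 / 6) t
          = Real.cosh t - 1 - t ^ 2 / 2 := by
        have h1 : HasDerivAt (fun t : ℝ => Real.sinh t - t - t ^ 3 / 6)
            (Real.cosh t - 1 - 3 * t ^ 2 / 6) t := by
          have := (Real.hasDerivAt_sinh t).sub (hasDerivAt_id t)
          have h2 : HasDerivAt (fun t : ℝ => t ^ 3 / 6) (3 * t ^ 2 / 6) t := by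
            simpa using (hasDerivAt_pow 3 t).div_const 6
          exact this.sub h2
        rw [h1.deriv]; ring
      rw [hd]
      have := aux_cosh_lower t
      linarith
  have h0 : (0:ℝ) ∈ Set.Ici (0:ℝ) := Set.self_mem_Ici
  have := hmono h0 hx hx
  simp only [Real.sinh_zero] at this
  linarith

/-- `sinh²v + sin²v ≥ 2v²` for `v ≥ 0`. -/
lemma aux_key_den (v : ℝ) (hv : 0 ≤ v) :
    2 * v ^ 2 ≤ Real.sinh v ^ 2 + Real.sin v ^ 2 := by
  have h1 : v + v ^ 3 / 6 ≤ Real.sinh v := aux_sinh_lower v hv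
  have h2 : v - v ^ 3 / 6 ≤ Real.sin v := aux_sin_lower v hv
  have h3 : Real.sin v ≤ v := Real.sin_le hv
  have h4 : (0:ℝ) ≤ v + v ^ 3 / 6 := by positivity
  have h5 : (0:ℝ) ≤ v + Real.sin v := by
    rcases le_or_gt v 1 with hv1 | hv1
    · nlinarith [h2, mul_nonneg (mul_nonneg hv (by linarith : (0:ℝ) ≤ 1 - v))
        (by linarith : (0:ℝ) ≤ 1 + v)]
    · nlinarith [Real.neg_one_le_sin v]
  -- sinh² ≥ (v + v³/6)², and v² - sin² = (v - sin)(v + sin) ≤ (v³/6)(2v)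
  nlinarith [sq_nonneg (Real.sin v), mul_nonneg (sub_nonneg.2 h3) h5,
    mul_le_mul (by linarith : v - Real.sin v ≤ v ^ 3 / 6)
      (by linarith : v + Real.sin v ≤ 2 * v) h5
      (by positivity : (0:ℝ) ≤ v ^ 3 / 6)]

/-- `|1 - e^{-s(1-i)}|² ≤ 2s²` for `s ≥ 0`. -/
lemma aux_num (s : ℝ) (hs : 0 ≤ s) :
    ‖1 - Complex.exp (-(s : ℂ) * (1 - Complex.I))‖ ^ 2 ≤ 2 * s ^ 2 := by
  have hexp : Complex.exp (-(s : ℂ) * (1 - Complex.I))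
      = (Real.exp (-s) : ℂ) * (Real.cos s + Real.sin s * Complex.I) := by
    have : -(s : ℂ) * (1 - Complex.I) = (-s : ℝ) + (s : ℝ) * Complex.I := by
      push_cast; ring
    rw [this, Complex.exp_add_mul_I, Complex.ofReal_exp, Complex.ofReal_cos,
      Complex.ofReal_sin]
  rw [hexp, ← Complex.normSq_eq_norm_sq]
  have hre : (1 - (Real.exp (-s) : ℂ) * (Real.cos s + Real.sin s * Complex.I)).re
      = 1 - Real.exp (-s) * Real.cos s := by
    simp [-Complex.ofReal_exp, -Complex.ofReal_cos, -Complex.ofReal_sin, Complex.cos_ofReal_re, Complex.sin_ofReal_re]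
  have him : (1 - (Real.exp (-s) : ℂ) * (Real.cos s + Real.sin s * Complex.I)).im
      = -(Real.exp (-s) * Real.sin s) := by
    simp [-Complex.ofReal_exp, -Complex.ofReal_cos, -Complex.ofReal_sin, Complex.cos_ofReal_re, Complex.sin_ofReal_re]
  rw [Complex.normSq_apply, hre, him]
  have hcs : Real.sin s ^ 2 + Real.cos s ^ 2 = 1 := Real.sin_sq_add_cos_sq s
  have he1 : Real.exp (-s) ≤ 1 := Real.exp_le_one_iff.2 (by linarith)
  have he2 : 1 - s ≤ Real.exp (-s) := by
    have := Real.add_one_le_exp (-s); linarith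
  have he3 : 0 < Real.exp (-s) := Real.exp_pos _
  have hcos : 1 - s ^ 2 / 2 ≤ Real.cos s := Real.one_sub_sq_div_two_le_cos
  have hcos1 : Real.cos s ≤ 1 := Real.cos_le_one s
  nlinarith [sq_nonneg (1 - Real.exp (-s)), sq_nonneg s,
    mul_nonneg he3.le (by linarith : (0:ℝ) ≤ 1 - Real.cos s),
    mul_le_mul_of_nonneg_left (by linarith : 1 - Real.cos s ≤ s ^ 2 / 2) he3.le,
    sq_nonneg (1 - Real.exp (-s) - s)]

/-- `|e^{r(1-i)} - e^{-r(1-i)}|² ≥ 8r²` for `r ≥ 0`. -/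
lemma aux_den (r : ℝ) (hr : 0 ≤ r) :
    8 * r ^ 2 ≤ ‖Complex.exp ((r : ℂ) * (1 - Complex.I))
      - Complex.exp (-(r : ℂ) * (1 - Complex.I))‖ ^ 2 := by
  have hexp1 : Complex.exp ((r : ℂ) * (1 - Complex.I))
      = (Real.exp r : ℂ) * (Real.cos (-r) + Real.sin (-r) * Complex.I) := by
    have : (r : ℂ) * (1 - Complex.I) = (r : ℝ) + ((-r : ℝ) : ℂ) * Complex.I := by
      push_cast; ring
    rw [this, Complex.exp_add_mul_I, Complex.ofReal_exp, Complex.ofReal_cos,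
      Complex.ofReal_sin]
  have hexp2 : Complex.exp (-(r : ℂ) * (1 - Complex.I))
      = (Real.exp (-r) : ℂ) * (Real.cos r + Real.sin r * Complex.I) := by
    have : -(r : ℂ) * (1 - Complex.I) = ((-r : ℝ) : ℂ) + (r : ℝ) * Complex.I := by
      push_cast; ring
    rw [this, Complex.exp_add_mul_I, Complex.ofReal_exp, Complex.ofReal_cos,
      Complex.ofReal_sin]
  rw [hexp1, hexp2, ← Complex.normSq_eq_norm_sq]
  rw [Real.cos_neg, Real.sin_neg]
  have hre : ((Real.exp r : ℂ) * (Real.cos r + (-Real.sin r : ℝ) * Complex.I)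
      - (Real.exp (-r) : ℂ) * (Real.cos r + Real.sin r * Complex.I)).re
      = (Real.exp r - Real.exp (-r)) * Real.cos r := by
    simp [-Complex.ofReal_exp, -Complex.ofReal_cos, -Complex.ofReal_sin, Complex.cos_ofReal_re, Complex.sin_ofReal_re]
    ring
  have him : ((Real.exp r : ℂ) * (Real.cos r + (-Real.sin r : ℝ) * Complex.I)
      - (Real.exp (-r) : ℂ) * (Real.cos r + Real.sin r * Complex.I)).im
      = -((Real.exp r + Real.exp (-r)) * Real.sin r) := by
    simp [-Complex.ofReal_exp, -Complex.ofReal_cos, -Complex.ofReal_sin, Complex.cos_ofReal_re, Complex.sin_ofReal_re]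
    ring
  rw [Complex.normSq_apply, hre, him]
  have hkey := aux_key_den r hr
  have hsinh : Real.sinh r = (Real.exp r - Real.exp (-r)) / 2 := Real.sinh_eq r
  have hcs : Real.sin r ^ 2 + Real.cos r ^ 2 = 1 := Real.sin_sq_add_cos_sq r
  have hEF : Real.exp r * Real.exp (-r) = 1 := by
    rw [← Real.exp_add]; simp
  have heq : (Real.exp r - Real.exp (-r)) * Real.cos r
        * ((Real.exp r - Real.exp (-r)) * Real.cos r)
      + -((Real.exp r + Real.exp (-r)) * Real.sin r)
        * -((Real.exp r + Real.exp (-r)) * Real.sin r)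
      = (Real.exp r - Real.exp (-r)) ^ 2 + 4 * Real.sin r ^ 2 := by
    linear_combination 4 * Real.sin r ^ 2 * hEF
      + (Real.exp r - Real.exp (-r)) ^ 2 * hcs
  rw [heq]
  have e1sq : (Real.exp r - Real.exp (-r)) ^ 2 = 4 * Real.sinh r ^ 2 := by
    rw [hsinh]; ring
  linarith [hkey, e1sq.ge, e1sq.le]

/-- For `a ∈ (0,1]` and `τ ≥ 0`, `|G(τ)| ≤ G(0) = 2a`. -/
theorem Gfun_bound (a : ℝ) (ha0 : 0 < a) (ha1 : a ≤ 1) :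
    Gfun a 0 = (2 * a : ℝ) ∧ ∀ τ : ℝ, 0 ≤ τ → ‖Gfun a τ‖ ≤ 2 * a := by
  constructor
  · simp [Gfun]
  intro τ hτ
  rcases eq_or_lt_of_le hτ with hτ0 | hτ0
  · rw [Gfun, if_pos hτ0.symm]
    rw [Complex.norm_real, Real.norm_eq_abs]
    rw [abs_of_nonneg (by linarith)]
  -- τ > 0
  have hτne : τ ≠ 0 := ne_of_gt hτ0
  rw [Gfun, if_neg hτne]
  set r : ℝ := Real.pi * τ * (Real.sqrt 2 / 2) with hrdef
  have hsqrt2 : (0:ℝ) < Real.sqrt 2 := Real.sqrt_pos.2 (by norm_num)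
  have hr : 0 < r := by
    have := Real.pi_pos
    positivity
  have homg : omg = ((Real.sqrt 2 / 2 : ℝ) : ℂ) * (1 - Complex.I) := by
    unfold omg
    have harg : -(Real.pi : ℂ) * Complex.I / 4 = ((-(Real.pi/4) : ℝ) : ℂ) * Complex.I := by
      push_cast; ring
    rw [harg, Complex.exp_mul_I, ← Complex.ofReal_cos, ← Complex.ofReal_sin]
    rw [Real.cos_neg, Real.sin_neg, Real.cos_pi_div_four, Real.sin_pi_div_four]
    push_cast; ring
  have hW : (Real.pi : ℂ) * omg * (τ : ℂ) = (r : ℂ) * (1 - Complex.I) := by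
    rw [homg, hrdef]; push_cast; ring
  set c : ℝ := 2 * a * r with hcdef
  have hc : 0 < c := by positivity
  have hZ : 2 * (Real.pi : ℂ) * (a : ℂ) * omg * (τ : ℂ) = (c : ℂ) * (1 - Complex.I) := by
    rw [homg, hcdef, hrdef]; push_cast; ring
  have hZ' : -2 * (Real.pi : ℂ) * (a : ℂ) * omg * (τ : ℂ) = -((c : ℂ) * (1 - Complex.I)) := by
    rw [homg, hcdef, hrdef]; push_cast; ring
  rw [hZ, hZ', hW]
  -- rewrite as (1 - exp(-2c(1-I))) / (exp(r(1-I)) - exp(-(r(1-I))))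
  set z : ℂ := (c : ℂ) * (1 - Complex.I) with hzdef
  set w : ℂ := (r : ℂ) * (1 - Complex.I) with hwdef
  have hnum : Complex.exp (-z) * Complex.sinh z
      = (1 - Complex.exp (-((2*c : ℝ) : ℂ) * (1 - Complex.I))) / 2 := by
    have hsz : Complex.sinh z = (Complex.exp z - Complex.exp (-z)) / 2 := by
      rw [eq_div_iff (two_ne_zero), mul_comm]
      exact Complex.two_sinh z
    rw [hsz]
    have h1 : Complex.exp (-z) * Complex.exp z = 1 := by
      rw [← Complex.exp_add]; simp
    have h2 : Complex.exp (-z) * Complex.exp (-z)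
        = Complex.exp (-((2*c : ℝ) : ℂ) * (1 - Complex.I)) := by
      rw [← Complex.exp_add]
      congr 1
      rw [hzdef]; push_cast; ring
    calc Complex.exp (-z) * ((Complex.exp z - Complex.exp (-z)) / 2)
        = (Complex.exp (-z) * Complex.exp z
            - Complex.exp (-z) * Complex.exp (-z)) / 2 := by ring
      _ = (1 - Complex.exp (-((2*c : ℝ) : ℂ) * (1 - Complex.I))) / 2 := by
          rw [h1, h2]
  have hden : Complex.sinh w = (Complex.exp w - Complex.exp (-w)) / 2 := by
    rw [eq_div_iff (two_ne_zero)]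
    rw [mul_comm]
    exact Complex.two_sinh w
  rw [hnum, hden]
  have habs_num : ‖1 - Complex.exp (-((2*c : ℝ) : ℂ) * (1 - Complex.I))‖ ^ 2
      ≤ 2 * (2*c) ^ 2 := aux_num (2*c) (by linarith)
  have habs_den : 8 * r ^ 2 ≤ ‖Complex.exp w - Complex.exp (-w)‖ ^ 2 := by
    have := aux_den r hr.le
    rw [hwdef]
    convert this using 4
    ring
  have hden_pos : 0 < ‖Complex.exp w - Complex.exp (-w)‖ := by
    by_contra h
    push_neg at h
    have : ‖Complex.exp w - Complex.exp (-w)‖ = 0 :=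
      le_antisymm h (norm_nonneg _)
    rw [this] at habs_den
    nlinarith
  have hDne : Complex.exp w - Complex.exp (-w) ≠ 0 := by
    intro h
    rw [h] at hden_pos
    simp at hden_pos
  have hq : (1 - Complex.exp (-((2*c : ℝ) : ℂ) * (1 - Complex.I))) / 2
        / ((Complex.exp w - Complex.exp (-w)) / 2)
      = (1 - Complex.exp (-((2*c : ℝ) : ℂ) * (1 - Complex.I)))
        / (Complex.exp w - Complex.exp (-w)) := by
    field_simp
  rw [hq, norm_div, div_le_iff₀ hden_pos]
  -- from squares: num² ≤ 2(2c)² = 8c² = 32a²r² ≤ 4a²·den²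
  have h1 : ‖1 - Complex.exp (-((2*c : ℝ) : ℂ) * (1 - Complex.I))‖ ^ 2
      ≤ (2 * a * ‖Complex.exp w - Complex.exp (-w)‖) ^ 2 := by
    have : (2 * a * ‖Complex.exp w - Complex.exp (-w)‖) ^ 2
        = 4 * a ^ 2 * ‖Complex.exp w - Complex.exp (-w)‖ ^ 2 := by ring
    rw [this]
    have h2 : 2 * (2*c) ^ 2 = 4 * a ^ 2 * (8 * r ^ 2) := by rw [hcdef]; ring
    calc ‖1 - Complex.exp (-((2*c : ℝ) : ℂ) * (1 - Complex.I))‖ ^ 2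
        ≤ 2 * (2*c) ^ 2 := habs_num
      _ = 4 * a ^ 2 * (8 * r ^ 2) := h2
      _ ≤ 4 * a ^ 2 * ‖Complex.exp w - Complex.exp (-w)‖ ^ 2 := by
          apply mul_le_mul_of_nonneg_left habs_den (by positivity)
  have hnn1 : 0 ≤ ‖1 - Complex.exp (-((2*c : ℝ) : ℂ) * (1 - Complex.I))‖ :=
    norm_nonneg _
  have hnn2 : 0 ≤ 2 * a * ‖Complex.exp w - Complex.exp (-w)‖ := by positivity
  nlinarith [h1, hnn1, hnn2]
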